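/- An odd natural number n > 1 is the sum of two squares of coprime integers if and only if n is a product of primes each congruent to 1 modulo 4. -/

import Mathlib

/-- Product of coprime sums of two coprime squares is a sum of two coprime squares. -/
lemma aux_mul_coprime {x y u v : ℤ} (hxy : IsCoprime x y) (huv : IsCoprime u v)
    (hm : IsCoprime (x ^ 2 + y ^ 2) (u ^ 2 + v ^ 2)) :
    IsCoprime (x * u - y * v) (x * v + y * u) := by
  obtain ⟨a, b, hab⟩ := huv
  obtain ⟨s, t, hst⟩ := hxy
  obtain ⟨e, f, hef⟩ := hm
  exact ⟨e * (a * x - b * y) + f * (s * u - t * v),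
         e * (a * y + b * x) + f * (s * v + t * u), by
    linear_combination e * (x ^ 2 + y ^ 2) * hab + f * (u ^ 2 + v ^ 2) * hst + hef⟩

/-- If `A, B` are not coprime and satisfy the given relations, then `p` divides both. -/
lemma aux_p_dvd_of_not_coprime {p : ℕ} (hp : p.Prime) {u v A B : ℤ}
    (huv : IsCoprime u v)
    (hxA : ∃ x y : ℤ, A * x + B * y = u * (p : ℤ) ∧ B * x - A * y = v * (p : ℤ))
    (hAB0 : ¬(A = 0 ∧ B = 0))
    (hnc : ¬IsCoprime A B) : (p : ℤ) ∣ A ∧ (p : ℤ) ∣ B := by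
  obtain ⟨x, y, hxA, hxB⟩ := hxA
  rw [Int.isCoprime_iff_gcd_eq_one] at hnc
  obtain ⟨q, hq, hqg⟩ := Nat.exists_prime_and_dvd hnc
  have hqA : (q : ℤ) ∣ A := dvd_trans (Int.natCast_dvd_natCast.mpr hqg) (Int.gcd_dvd_left A B)
  have hqB : (q : ℤ) ∣ B := dvd_trans (Int.natCast_dvd_natCast.mpr hqg) (Int.gcd_dvd_right A B)
  have hqup : (q : ℤ) ∣ u * (p : ℤ) := hxA ▸ dvd_add (hqA.mul_right x) (hqB.mul_right y)
  have hqvp : (q : ℤ) ∣ v * (p : ℤ) := hxB ▸ dvd_sub (hqB.mul_right x) (hqA.mul_right y)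
  obtain ⟨a, b, hab⟩ := huv
  have hqp : (q : ℤ) ∣ (p : ℤ) := by
    have h : (p : ℤ) = a * (u * (p : ℤ)) + b * (v * (p : ℤ)) := by
      linear_combination (-(p : ℤ)) * hab
    rw [h]
    exact dvd_add (hqup.mul_left a) (hqvp.mul_left b)
  have : q = p := (Nat.prime_dvd_prime_iff_eq hq hp).mp (Int.natCast_dvd_natCast.mp hqp)
  subst this
  exact ⟨hqA, hqB⟩

/-- Prime powers of primes `≡ 1 mod 4` are sums of two coprime squares. -/
lemma aux_prime_pow {p : ℕ} (hp : p.Prime) (hp4 : p % 4 = 1) (k : ℕ) :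
    ∃ a b : ℤ, IsCoprime a b ∧ ((p : ℤ)) ^ k = a ^ 2 + b ^ 2 := by
  haveI : Fact p.Prime := ⟨hp⟩
  obtain ⟨x', y', hxy'⟩ := Nat.Prime.sq_add_sq (p := p) (by omega)
  set x : ℤ := (x' : ℤ)
  set y : ℤ := (y' : ℤ)
  have hx : (p : ℤ) = x ^ 2 + y ^ 2 := by rw [← hxy']; push_cast; ring
  have hP : Prime (p : ℤ) := Nat.prime_iff_prime_int.mp hp
  have hxy : IsCoprime x y := by
    rw [Int.isCoprime_iff_gcd_eq_one]
    by_contra hg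
    obtain ⟨q, hq, hqg⟩ := Nat.exists_prime_and_dvd hg
    have hqx : (q : ℤ) ∣ x := dvd_trans (Int.natCast_dvd_natCast.mpr hqg) (Int.gcd_dvd_left x y)
    have hqy : (q : ℤ) ∣ y := dvd_trans (Int.natCast_dvd_natCast.mpr hqg) (Int.gcd_dvd_right x y)
    have hq2p : (q : ℤ) * (q : ℤ) ∣ (p : ℤ) := by
      rw [hx]
      obtain ⟨c, hc⟩ := hqx
      obtain ⟨d, hd⟩ := hqy
      exact ⟨c * c + d * d, by rw [hc, hd]; ring⟩
    have hqp : q ∣ p := by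
      have h : (q : ℤ) ∣ (p : ℤ) := dvd_trans (dvd_mul_right _ _) hq2p
      exact_mod_cast h
    have hqep : q = p := (Nat.prime_dvd_prime_iff_eq hq hp).mp hqp
    subst hqep
    have h1 : (q : ℤ) * (q : ℤ) ∣ (q : ℤ) * 1 := by simpa using hq2p
    have hqq : (q : ℤ) ∣ 1 :=
      (mul_dvd_mul_iff_left (by exact_mod_cast hq.ne_zero : (q : ℤ) ≠ 0)).mp h1
    exact hq.one_lt.ne' (by exact_mod_cast Int.eq_one_of_dvd_one (by positivity) hqq)
  induction k with
  | zero => exact ⟨1, 0, isCoprime_one_left, by ring⟩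
  | succ k ih =>
    obtain ⟨u, v, huv, hk⟩ := ih
    have hprod : (p : ℤ) ^ (k + 1) = (x ^ 2 + y ^ 2) * (u ^ 2 + v ^ 2) := by
      rw [pow_succ, hk, hx]; ring
    have hsum : (p : ℤ) ^ (k + 1) = (x * u - y * v) ^ 2 + (x * v + y * u) ^ 2 := by
      rw [hprod]; ring
    have hsum' : (p : ℤ) ^ (k + 1) = (x * u + y * v) ^ 2 + (x * v - y * u) ^ 2 := by
      rw [hprod]; ring
    have hpk0 : (p : ℤ) ^ (k + 1) ≠ 0 := pow_ne_zero _ (by exact_mod_cast hp.ne_zero)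
    have hAB0 : ¬(x * u - y * v = 0 ∧ x * v + y * u = 0) := by
      rintro ⟨h1, h2⟩; apply hpk0; rw [hsum, h1, h2]; ring
    have hAB0' : ¬(x * u + y * v = 0 ∧ x * v - y * u = 0) := by
      rintro ⟨h1, h2⟩; apply hpk0; rw [hsum', h1, h2]; ring
    by_cases hc : IsCoprime (x * u - y * v) (x * v + y * u)
    · exact ⟨_, _, hc, hsum⟩
    by_cases hc' : IsCoprime (x * u + y * v) (x * v - y * u)
    · exact ⟨_, _, hc', hsum'⟩
    exfalso
    have h1 : (p : ℤ) ∣ x * u - y * v ∧ (p : ℤ) ∣ x * v + y * u := by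
      refine aux_p_dvd_of_not_coprime hp huv ⟨x, y, ?_, ?_⟩ hAB0 hc
      · linear_combination (-u) * hx
      · linear_combination (-v) * hx
    have h2 : (p : ℤ) ∣ x * u + y * v ∧ (p : ℤ) ∣ x * v - y * u := by
      refine aux_p_dvd_of_not_coprime hp huv ⟨x, -y, ?_, ?_⟩ hAB0' hc'
      · linear_combination (-u) * hx
      · linear_combination (-v) * hx
    have hodd : ¬((p : ℤ) ∣ 2) := by
      intro h
      have h' : p ∣ 2 := by exact_mod_cast h
      have := (Nat.prime_dvd_prime_iff_eq hp Nat.prime_two).mp h'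
      omega
    have hxu : (p : ℤ) ∣ x * u := by
      rcases hP.dvd_mul.mp (show (p : ℤ) ∣ 2 * (x * u) from by
        have h : (p : ℤ) ∣ _ := dvd_add h1.1 h2.1; convert h using 1; ring) with h | h
      · exact absurd h hodd
      · exact h
    have hyv : (p : ℤ) ∣ y * v := by
      rcases hP.dvd_mul.mp (show (p : ℤ) ∣ 2 * (y * v) from by
        have h : (p : ℤ) ∣ _ := dvd_sub h2.1 h1.1; convert h using 1; ring) with h | h
      · exact absurd h hodd
      · exact h
    have hxv : (p : ℤ) ∣ x * v := by
      rcases hP.dvd_mul.mp (show (p : ℤ) ∣ 2 * (x * v) from by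
        have h : (p : ℤ) ∣ _ := dvd_add h1.2 h2.2; convert h using 1; ring) with h | h
      · exact absurd h hodd
      · exact h
    have hyu : (p : ℤ) ∣ y * u := by
      rcases hP.dvd_mul.mp (show (p : ℤ) ∣ 2 * (y * u) from by
        have h : (p : ℤ) ∣ _ := dvd_sub h1.2 h2.2; convert h using 1; ring) with h | h
      · exact absurd h hodd
      · exact h
    have hpx : (p : ℤ) ∣ x := by
      rcases hP.dvd_mul.mp hxu with h | h
      · exact h
      · rcases hP.dvd_mul.mp hxv with h' | h'
        · exact h'
        · exact absurd (huv.isUnit_of_dvd' h h') hP.not_unit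
    have hpny : ¬((p : ℤ) ∣ y) := fun h => hP.not_unit (hxy.isUnit_of_dvd' hpx h)
    have hpv : (p : ℤ) ∣ v := (hP.dvd_mul.mp hyv).resolve_left hpny
    have hpu : (p : ℤ) ∣ u := (hP.dvd_mul.mp hyu).resolve_left hpny
    exact hP.not_unit (huv.isUnit_of_dvd' hpu hpv)

lemma aux_main (n : ℕ) (H : ∀ p : ℕ, p.Prime → p ∣ n → p % 4 = 1) :
    ∃ a b : ℤ, IsCoprime a b ∧ (n : ℤ) = a ^ 2 + b ^ 2 := by
  induction n using Nat.recOnPosPrimePosCoprime with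
  | prime_pow p k hp hk =>
    have hpp : p.Prime := hp
    have h4 : p % 4 = 1 := H p hpp (dvd_pow_self p hk.ne')
    obtain ⟨a, b, hab, h⟩ := aux_prime_pow hpp h4 k
    exact ⟨a, b, hab, by push_cast; exact h⟩
  | zero => exact absurd (H 3 (by norm_num) (dvd_zero 3)) (by norm_num)
  | one => exact ⟨1, 0, isCoprime_one_left, by norm_num⟩
  | coprime a b ha hb hab iha ihb =>
    obtain ⟨x, y, hxy, hx⟩ := iha fun p hp hpd => H p hp (hpd.mul_right b)
    obtain ⟨u, v, huv, hu⟩ := ihb fun p hp hpd => H p hp (hpd.mul_left a)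
    have hm : IsCoprime (x ^ 2 + y ^ 2) (u ^ 2 + v ^ 2) := by
      rw [← hx, ← hu]
      exact Int.isCoprime_iff_gcd_eq_one.mpr (by simpa [Int.gcd_natCast_natCast] using hab)
    refine ⟨x * u - y * v, x * v + y * u, aux_mul_coprime hxy huv hm, ?_⟩
    push_cast
    rw [hx, hu]; ring

theorem stmt_0 (n : ℕ) (hodd : Odd n) (hn : 1 < n) :
    (∃ a b : ℤ, IsCoprime a b ∧ (n : ℤ) = a ^ 2 + b ^ 2) ↔
    (∀ p : ℕ, p.Prime → p ∣ n → p % 4 = 1) := by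
  constructor
  · rintro ⟨a, b, hab, h⟩ p hp hpn
    have hsq : IsSquare (-1 : ZMod n) := by
      have := ZMod.isSquare_neg_one_of_eq_sq_add_sq_of_isCoprime h hab
      simpa using this
    have h3 : p % 4 ≠ 3 := Nat.mod_four_ne_three_of_mem_primeFactors_of_isSquare_neg_one
      (Nat.mem_primeFactors.mpr ⟨hp, hpn, by omega⟩) hsq
    have h2 : ¬(2 ∣ p) := by
      intro h2
      have h2n : (2 : ℕ) ∣ n := h2.trans hpn
      exact (Nat.not_even_iff_odd.mpr hodd) (even_iff_two_dvd.mpr h2n)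
    omega
  · exact fun H => aux_main n H
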